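/- If node v is non-sending at time t_i (no edges outgoing from v at time t_i) and t_{i+1} is the next time after t_i, then for every depth d ≥ 0: c^{(d+1)}_G(v, t_i) = c^{(d+1)}_G(v, t_{i+1}) if and only if c^{(0)}(v, t_i) = c^{(0)}(v, t_{i+1}). -/

import Mathlib

/-- The type of refinement colors at depth `d`, starting from initial colors in `C0`:
a depth-`(d+1)` color is a pair of the depth-`d` color and a multiset of depth-`d` colors. -/
def ColorT (C0 : Type) : ℕ → Type
  | 0 => C0
  | d+1 => ColorT C0 d × Multiset (ColorT C0 d)

instance colorTDecEq (C0 : Type) [DecidableEq C0] : ∀ d, DecidableEq (ColorT C0 d)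
  | 0 => inferInstanceAs (DecidableEq C0)
  | d+1 => letI := colorTDecEq C0 d
           inferInstanceAs (DecidableEq (ColorT C0 d × Multiset (ColorT C0 d)))

variable {V T C0 : Type} [DecidableEq V] [LinearOrder T]

/-- Causal successor set of temporal node `(v,t)`: endpoints of edges outgoing
from `v` at times `≥ t`. -/
def succF (E : Finset (V × V × T)) (v : V) (t : T) : Finset (V × T) :=
  (E.filter (fun e => e.1 = v ∧ t ≤ e.2.2)).image (fun e => e.2)

/-- Temporal color refinement (perfect-hash version):
`refine E c0 (d+1) v t = (refine E c0 d v t, multiset of depth-d colors of successors)`. -/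
def refine (E : Finset (V × V × T)) (c0 : V → T → C0) :
    (d : ℕ) → V → T → ColorT C0 d
  | 0, v, t => c0 v t
  | d+1, v, t =>
      (refine E c0 d v t,
       (succF E v t).val.map (fun p => refine E c0 d p.1 p.2))

lemma succF_eq (E : Finset (V × V × T)) (v : V) (ti ti1 : T) (hlt : ti < ti1)
    (hnonsend : ∀ w, (v, w, ti) ∉ E)
    (hnext : ∀ e ∈ E, ¬ (ti < e.2.2 ∧ e.2.2 < ti1)) :
    succF E v ti = succF E v ti1 := by
  unfold succF
  congr 1
  apply Finset.filter_congr
  intro e he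
  constructor
  · rintro ⟨h1, h2⟩
    refine ⟨h1, ?_⟩
    rcases lt_or_eq_of_le h2 with h | h
    · by_contra hn
      exact hnext e he ⟨h, lt_of_not_ge hn⟩
    · exfalso
      obtain ⟨a, b, c⟩ := e
      simp only at h1 h
      subst h1; subst h
      exact hnonsend b he
  · rintro ⟨h1, h2⟩
    exact ⟨h1, le_of_lt (lt_of_lt_of_le hlt h2)⟩

/-- **Non-sending nodes keep their colors.** If `v` is non-sending at time `ti`
(no outgoing edges from `v` at `ti`) and `ti1` is the next time (no edge timestamp lies
strictly between `ti` and `ti1`), then for all `d`, the depth-`(d+1)` colors of `(v,ti)`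
and `(v,ti1)` agree iff their initial colors agree. -/
theorem nonsending_color_iff [DecidableEq C0] (E : Finset (V × V × T)) (c0 : V → T → C0)
    (v : V) (ti ti1 : T) (hlt : ti < ti1)
    (hnonsend : ∀ w, (v, w, ti) ∉ E)
    (hnext : ∀ e ∈ E, ¬ (ti < e.2.2 ∧ e.2.2 < ti1)) (d : ℕ) :
    refine E c0 (d+1) v ti = refine E c0 (d+1) v ti1 ↔ c0 v ti = c0 v ti1 := by
  have hs := succF_eq E v ti ti1 hlt hnonsend hnext
  induction d with
  | zero =>
    show ((c0 v ti, _) : ColorT C0 0 × Multiset (ColorT C0 0)) = (c0 v ti1, _) ↔ _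
    rw [hs]
    erw [Prod.mk.injEq]
    simp
    exact Iff.rfl
  | succ d ih =>
    rw [show refine E c0 (d+1+1) v ti =
      (refine E c0 (d+1) v ti,
       (succF E v ti).val.map (fun p => refine E c0 (d+1) p.1 p.2)) from rfl,
      show refine E c0 (d+1+1) v ti1 =
      (refine E c0 (d+1) v ti1,
       (succF E v ti1).val.map (fun p => refine E c0 (d+1) p.1 p.2)) from rfl]
    rw [hs]
    erw [Prod.mk.injEq]
    simp [ih]
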